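/- Let K be a field, n ≥ 3, and let S_n be the monoid presented by generators a_1, …, a_n and relations a_1 a_2 ⋯ a_n = a_{σ(1)} ⋯ a_{σ(n)} for σ in the cyclic group generated by the n-cycle. Let P = (a_1 ⋯ a_n)·S_n. Then the prime ideal K[P] of K[S_n] has height one: if P_0 is a nonzero prime two-sided ideal of K[S_n] with P_0 ⊆ K[P], then P_0 = K[P]. -/

import Mathlib

/-- The word `a_{σ(1)} a_{σ(2)} ⋯ a_{σ(n)}` in the free monoid on `n` generators. -/
def permWord (n : ℕ) (σ : Equiv.Perm (Fin n)) : FreeMonoid (Fin n) :=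
  ((List.finRange n).map fun i => FreeMonoid.of (σ i)).prod

/-- The defining relations `a_1 a_2 ⋯ a_n = a_{σ(1)} a_{σ(2)} ⋯ a_{σ(n)}`, where `σ` runs
through the cyclic subgroup of `Sym_n` generated by the `n`-cycle `(1,2,…,n)` (i.e. `finRotate n`). -/
def cycRel (n : ℕ) : FreeMonoid (Fin n) → FreeMonoid (Fin n) → Prop :=
  fun x y => x = permWord n 1 ∧ ∃ k : ℕ, y = permWord n (finRotate n ^ k)

/-- The monoid `S_n` presented by generators `a_1, …, a_n` and the above relations. -/
def Scyc (n : ℕ) : Type := (conGen (cycRel n)).Quotient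

instance (n : ℕ) : Monoid (Scyc n) := Con.monoid _

/-- The generator `a_i` of `S_n`. -/
def agen {n : ℕ} (i : Fin n) : Scyc n := (conGen (cycRel n)).mk' (FreeMonoid.of i)

/-- The element `z = a_1 a_2 ⋯ a_n` of `S_n`. -/
def zc (n : ℕ) : Scyc n := ((List.finRange n).map agen).prod

lemma rot_list (m : ℕ) :
    (0 : Fin (m+1)) :: (List.finRange (m+1)).map (finRotate (m+1))
      = List.finRange (m+1) ++ [0] := by
  apply List.ext_getElem
  · simp
  · intro i h1 h2
    rcases i with _ | i
    · simp [List.getElem_append, Fin.ext_iff]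
    · simp only [List.getElem_cons_succ, List.getElem_map]
      have him : i < m + 1 := by simpa using h1
      rcases Nat.lt_or_ge (i+1) (m+1) with h | h
      · rw [List.getElem_append_left (by simpa using h)]
        simp only [List.getElem_finRange, finRotate_succ_apply]
        ext
        rw [Fin.val_add_one_of_lt (by simp [Fin.lt_iff_val_lt_val, Fin.last]; omega)]
        simp
      · have hi : i = m := by simp at h1; omega
        rw [List.getElem_append_right (by simp; omega)]
        have h3 : (List.finRange (m+1))[i]'(by simp; omega) = Fin.last m := by
          simp [Fin.ext_iff, hi, Fin.last]
        rw [h3, finRotate_last]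
        simp


lemma toList_prod_map_of {α β : Type*} (f : β → α) (l : List β) :
    (FreeMonoid.toList ((l.map fun i => FreeMonoid.of (f i)).prod)) = l.map f := by
  induction l with
  | nil => rfl
  | cons a l ih => simp [ih]

lemma permWord_toList (n : ℕ) (σ : Equiv.Perm (Fin n)) :
    (permWord n σ).toList = (List.finRange n).map σ := toList_prod_map_of _ _

/-- key identity in the free monoid -/
lemma key_free (m : ℕ) (k : ℕ) :
    FreeMonoid.of ((finRotate (m+1) ^ k) 0) * permWord (m+1) (finRotate (m+1) ^ (k+1))
      = permWord (m+1) (finRotate (m+1) ^ k) * FreeMonoid.of ((finRotate (m+1) ^ k) 0) := by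
  apply FreeMonoid.toList.injective
  simp only [FreeMonoid.toList_mul, permWord_toList, FreeMonoid.toList_of]
  have h1 : ∀ j : Fin (m+1), (finRotate (m+1) ^ (k+1)) j = (finRotate (m+1) ^ k) (finRotate (m+1) j) := by
    intro j
    rw [pow_succ, Equiv.Perm.mul_apply]
  rw [List.map_congr_left (fun j _ => h1 j)]
  rw [show (fun j => (finRotate (m+1) ^ k) ((finRotate (m+1)) j))
      = ((finRotate (m+1) ^ k : Equiv.Perm (Fin (m+1))) : Fin (m+1) → Fin (m+1)) ∘ (finRotate (m+1)) from rfl]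
  rw [List.singleton_append, ← List.map_map, ← List.map_cons, rot_list m, List.map_append]
  rfl


lemma mk_mul {n : ℕ} (x y : FreeMonoid (Fin n)) :
    ((conGen (cycRel n)).mk' x * (conGen (cycRel n)).mk' y : Scyc n)
      = (conGen (cycRel n)).mk' (x * y) := rfl

lemma mk_one (n : ℕ) : ((conGen (cycRel n)).mk' 1 : Scyc n) = 1 := rfl

lemma mk_prod (n : ℕ) (l : List (FreeMonoid (Fin n))) :
    ((l.map ((conGen (cycRel n)).mk')).prod : Scyc n) = (conGen (cycRel n)).mk' l.prod := by
  induction l with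
  | nil => exact (mk_one n).symm
  | cons a l ih => rw [List.map_cons, List.prod_cons, List.prod_cons, ih, mk_mul]

lemma zc_eq (n : ℕ) : zc n = (conGen (cycRel n)).mk' (permWord n 1) := by
  unfold zc permWord agen
  erw [show (List.map (fun i : Fin n => (conGen (cycRel n)).mk' (FreeMonoid.of i)) (List.finRange n))
      = List.map ((conGen (cycRel n)).mk')
          (List.map (fun i => FreeMonoid.of ((1 : Equiv.Perm (Fin n)) i)) (List.finRange n)) from by
        rw [List.map_map]; rfl]
  erw [mk_prod]

lemma rel_k (n : ℕ) (k : ℕ) :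
    (conGen (cycRel n)).mk' (permWord n 1)
      = (conGen (cycRel n)).mk' (permWord n (finRotate n ^ k)) :=
  (Con.eq _).2 (ConGen.Rel.of _ _ ⟨rfl, ⟨k, rfl⟩⟩)

open Fin.NatCast in
lemma pow_rot_zero (m k : ℕ) : (finRotate (m+1) ^ k) 0 = (k : Fin (m+1)) := by
  induction k with
  | zero => simp
  | succ k ih =>
      rw [pow_succ', Equiv.Perm.mul_apply, ih, finRotate_succ_apply]
      push_cast
      ring

open Fin.NatCast in
lemma zc_comm_agen {n : ℕ} (hn : 1 ≤ n) (i : Fin n) :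
    agen i * zc n = zc n * agen i := by
  obtain ⟨m, rfl⟩ : ∃ m, n = m + 1 := ⟨n - 1, by omega⟩
  obtain ⟨k, rfl⟩ : ∃ k : ℕ, (finRotate (m+1) ^ k) 0 = i :=
    ⟨i.val, by rw [pow_rot_zero]; exact Fin.cast_val_eq_self i⟩
  unfold agen
  erw [zc_eq, rel_k (m+1) (k+1), mk_mul, mk_mul, key_free m k, ← mk_mul, ← mk_mul,
      ← rel_k (m+1) k, rel_k (m+1) (k+1)]

lemma zc_central {n : ℕ} (hn : 1 ≤ n) (x : Scyc n) : x * zc n = zc n * x := by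
  obtain ⟨w, rfl⟩ := Con.mk'_surjective (c := conGen (cycRel n)) x
  induction w using FreeMonoid.recOn with
  | one => erw [mk_one, one_mul, mul_one]
  | of_mul a w ihw =>
      erw [← mk_mul, mul_assoc, ihw, ← mul_assoc, ← mul_assoc]
      congr 1
      exact zc_comm_agen hn a

def W0 (n : ℕ) : FreeMonoid (Fin n) →* Multiplicative ℕ :=
  FreeMonoid.lift fun _ => Multiplicative.ofAdd 1

lemma W0_permWord (n : ℕ) (σ : Equiv.Perm (Fin n)) :
    W0 n (permWord n σ) = Multiplicative.ofAdd n := by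
  unfold W0
  rw [FreeMonoid.lift_apply, permWord_toList, List.map_map]
  have h : ((fun _ : Fin n => (Multiplicative.ofAdd 1 : Multiplicative ℕ)) ∘ σ)
      = fun _ => Multiplicative.ofAdd 1 := rfl
  rw [h, List.map_const', List.prod_replicate, List.length_finRange]
  rw [← ofAdd_nsmul]
  simp

def Wq (n : ℕ) : Scyc n →* Multiplicative ℕ :=
  Con.lift _ (W0 n) (Con.conGen_le.2 (by
    rintro x y ⟨rfl, k, rfl⟩
    show W0 n _ = W0 n _
    rw [W0_permWord, W0_permWord]))

def degc {n : ℕ} (s : Scyc n) : ℕ := Multiplicative.toAdd (Wq n s)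

lemma degc_zc_mul (n : ℕ) (t : Scyc n) : degc (zc n * t) = n + degc t := by
  unfold degc
  rw [map_mul, toAdd_mul]
  congr 1
  rw [zc_eq]
  show Multiplicative.toAdd ((Con.lift _ (W0 n) _) ((conGen (cycRel n)).mk' (permWord n 1))) = n
  rw [Con.lift_mk', W0_permWord]
  rfl


/-- the prime ideal `K[P]` of `K[S_n]` has height one: every nonzero prime
two-sided ideal `P₀` of `K[S_n]` contained in `K[P]` equals `K[P]`. -/
theorem KP_height_one (K : Type*) [Field K] (n : ℕ) (hn : 3 ≤ n)
    (KP : Submodule K (MonoidAlgebra K (Scyc n)))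
    (hKP : KP = Submodule.span K (MonoidAlgebra.of K (Scyc n) '' {x | ∃ s, x = zc n * s}))
    (P₀ : Ideal (MonoidAlgebra K (Scyc n)))
    (hright : ∀ x ∈ P₀, ∀ r : MonoidAlgebra K (Scyc n), x * r ∈ P₀)
    (hnonzero : P₀ ≠ ⊥)
    (hproper : P₀ ≠ ⊤)
    (hprime : ∀ a b : MonoidAlgebra K (Scyc n), (∀ r, a * r * b ∈ P₀) → a ∈ P₀ ∨ b ∈ P₀)
    (hsub : (P₀ : Set (MonoidAlgebra K (Scyc n))) ⊆ (KP : Set (MonoidAlgebra K (Scyc n)))) :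
    (P₀ : Set (MonoidAlgebra K (Scyc n))) = (KP : Set (MonoidAlgebra K (Scyc n))) := by
  classical
  have hn1 : 1 ≤ n := by omega
  set zK : MonoidAlgebra K (Scyc n) := MonoidAlgebra.of K (Scyc n) (zc n) with hzK
  have hdecomp : ∀ x ∈ KP, ∃ y, x = zK * y := by
    intro x hx
    have hle : KP ≤ LinearMap.range (LinearMap.mulLeft K zK) := by
      rw [hKP]
      refine Submodule.span_le.2 ?_
      rintro _ ⟨v, ⟨s, rfl⟩, rfl⟩
      exact ⟨MonoidAlgebra.of K (Scyc n) s, by rw [LinearMap.mulLeft_apply, ← map_mul]⟩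
    obtain ⟨y, hy⟩ := hle hx
    exact ⟨y, by rw [← hy, LinearMap.mulLeft_apply]⟩
  have hcomm : ∀ f : MonoidAlgebra K (Scyc n), zK * f = f * zK := by
    intro f
    induction f using MonoidAlgebra.induction with
    | zero => simp
    | single_add a b f _ _ ih =>
        rw [mul_add, add_mul, ih]
        congr 1
        show zK * MonoidAlgebra.single a b = MonoidAlgebra.single a b * zK
        rw [hzK, MonoidAlgebra.of_apply, MonoidAlgebra.single_mul_single,
            MonoidAlgebra.single_mul_single, one_mul, mul_one, zc_central hn1]
  have hsupp : ∀ (y : MonoidAlgebra K (Scyc n)) (s : Scyc n), s ∈ (zK * y).coeff.support →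
      ∃ t ∈ y.coeff.support, s = zc n * t := by
    intro y s hs
    have h2 : (zK * y).coeff.support ⊆ Finset.image (zc n * ·) y.coeff.support := by
      rw [hzK, MonoidAlgebra.of_apply]
      exact MonoidAlgebra.support_coeff_single_mul_subset y 1 (zc n)
    obtain ⟨t, ht, rfl⟩ := Finset.mem_image.1 (h2 hs)
    exact ⟨t, ht, rfl⟩
  have hz : zK ∈ P₀ := by
    obtain ⟨x₀, hx₀P, hx₀⟩ := Submodule.exists_mem_ne_zero_of_ne_bot hnonzero
    obtain ⟨s₀, hs₀⟩ := (Finsupp.support_nonempty_iff (f := x₀.coeff)).2 (by simpa using hx₀)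
    have main : ∀ N : ℕ, ∀ x : MonoidAlgebra K (Scyc n), x ∈ P₀ → x ≠ 0 →
        (∃ s ∈ x.coeff.support, degc s < N) → zK ∈ P₀ := by
      intro N
      induction N using Nat.strong_induction_on with
      | _ N IH =>
        rintro x hxP hx0 ⟨s, hsx, hsN⟩
        obtain ⟨y, rfl⟩ := hdecomp x (hsub hxP)
        have hy0 : y ≠ 0 := by rintro rfl; simp at hx0
        have hall : ∀ r, zK * r * y ∈ P₀ := by
          intro r
          rw [hcomm r, mul_assoc]
          have := P₀.smul_mem r hxP
          rwa [smul_eq_mul] at this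
        rcases hprime zK y hall with h | h
        · exact h
        · obtain ⟨t, hty, rfl⟩ := hsupp y s hsx
          have hdeg : degc (zc n * t) = n + degc t := degc_zc_mul n t
          exact IH (degc t + 1) (by omega) y h hy0 ⟨t, hty, by omega⟩
    exact main (degc s₀ + 1) x₀ hx₀P hx₀ ⟨s₀, hs₀, by omega⟩
  apply Set.Subset.antisymm hsub
  intro x hx
  rw [hKP] at hx
  refine Submodule.span_induction ?_ ?_ ?_ ?_ hx
  · rintro _ ⟨v, ⟨s, rfl⟩, rfl⟩
    show MonoidAlgebra.of K (Scyc n) (zc n * s) ∈ P₀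
    rw [map_mul]
    exact hright zK hz _
  · exact P₀.zero_mem
  · intro a b _ _ ha hb; exact P₀.add_mem ha hb
  · intro k a _ ha; exact P₀.smul_of_tower_mem k ha
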